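/- Let F be a finite directed graph (finitely many vertices and edges) with no circuits. Then F admits a nonzero graph trace, i.e., a function T : F⁰ → ℝ≥0, not identically zero, such that T(r(e)) ≥ T(d(e)) for every edge e and T(v) = Σ_{e ∈ r⁻¹(v)} T(d(e)) for every vertex v with r⁻¹(v) nonempty. -/

import Mathlib

open scoped NNReal

lemma transgen_aux {E V : Type*} (r d : E → V) {a b : V}
    (h : Relation.TransGen (fun a b => ∃ e, d e = a ∧ r e = b) a b) :
    ∃ (γ : List E) (hne : γ ≠ []), List.Chain' (fun e f => d e = r f) γ ∧
      r (γ.head hne) = b ∧ d (γ.getLast hne) = a := by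
  induction h with
  | single h =>
    obtain ⟨e, he1, he2⟩ := h
    exact ⟨[e], by simp, List.isChain_singleton _, by simpa using he2, by simpa using he1⟩
  | tail _ h ih =>
    obtain ⟨e, he1, he2⟩ := h
    obtain ⟨γ, hne, hchain, hhead, hlast⟩ := ih
    refine ⟨e :: γ, by simp, ?_, by simpa using he2, ?_⟩
    · rw [List.Chain', List.isChain_cons]
      refine ⟨?_, hchain⟩
      intro y hy
      rw [List.head?_eq_head hne] at hy
      cases hy
      rw [he1, hhead]
    · rwa [List.getLast_cons hne]

/-- a finite directed graph with no circuits admits a nonzero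
graph trace. -/
theorem finite_acyclic_graph_has_trace {E V : Type*} [Fintype V] [Fintype E]
    [Nonempty V] [DecidableEq V]
    (r d : E → V)
    -- `F` has no circuits:
    (hnocirc : ¬ ∃ (γ : List E) (hne : γ ≠ []),
        List.Chain' (fun e f => d e = r f) γ ∧
        d (γ.getLast hne) = r (γ.head hne)) :
    -- there is a nonzero graph trace:
    ∃ T : V → ℝ≥0,
      (∃ v, T v ≠ 0) ∧
      (∀ e : E, T (d e) ≤ T (r e)) ∧
      (∀ v : V, (∃ e, r e = v) →
        T v = ∑ e ∈ Finset.univ.filter (fun e => r e = v), T (d e)) := by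
  classical
  set R : V → V → Prop := fun a b => ∃ e, d e = a ∧ r e = b with hR
  have hirr : Irreflexive (Relation.TransGen R) := by
    intro v hv
    obtain ⟨γ, hne, hchain, hhead, hlast⟩ := transgen_aux r d hv
    exact hnocirc ⟨γ, hne, hchain, by rw [hhead, hlast]⟩
  haveI : IsIrrefl V (Relation.TransGen R) := ⟨hirr⟩
  have hwf : WellFounded (Relation.TransGen R) :=
    Finite.wellFounded_of_trans_of_irrefl _
  have hwfR : WellFounded R := Subrelation.wf (fun h => Relation.TransGen.single h) hwf
  set F : ∀ v : V, (∀ y, R y v → ℝ≥0) → ℝ≥0 := fun v IH =>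
    if h : ∃ e, r e = v then
      ∑ e ∈ (Finset.univ.filter (fun e => r e = v)).attach,
        IH (d e.1) ⟨e.1, rfl, (Finset.mem_filter.mp e.2).2⟩
    else 1 with hF
  set T : V → ℝ≥0 := hwfR.fix F with hT
  have hfix : ∀ v, T v = F v (fun y _ => T y) := fun v => hwfR.fix_eq F v
  have htrace : ∀ v : V, (∃ e, r e = v) →
      T v = ∑ e ∈ Finset.univ.filter (fun e => r e = v), T (d e) := by
    intro v hv
    rw [hfix v, hF]
    simp only [dif_pos hv]
    exact Finset.sum_attach _ (fun e => T (d e))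
  refine ⟨T, ?_, ?_, htrace⟩
  · obtain ⟨v₀, -, hv₀⟩ := hwfR.has_min Set.univ ⟨Classical.arbitrary V, trivial⟩
    refine ⟨v₀, ?_⟩
    have : ¬ ∃ e, r e = v₀ := by
      rintro ⟨e, he⟩
      exact hv₀ (d e) trivial ⟨e, rfl, he⟩
    rw [hfix v₀, hF]
    simp [dif_neg this]
  · intro e
    rw [htrace (r e) ⟨e, rfl⟩]
    exact Finset.single_le_sum (f := fun f => T (d f)) (fun _ _ => zero_le)
      (Finset.mem_filter.mpr ⟨Finset.mem_univ e, rfl⟩)
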